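/- Let g be a harmonic polynomial on ℝ³ and u(x) = (2x·∇g(x) + g(x))x − |x|²∇g(x). If g = Σ_ℓ g_ℓ is the decomposition into harmonic homogeneous components of degree ℓ, then div u = Σ_ℓ (2ℓ² + 5ℓ + 3)·g_ℓ = Σ_ℓ (ℓ+1)(2ℓ+3)·g_ℓ. In particular, if div u is constant then g_ℓ = 0 for all ℓ ≥ 1, i.e., g is constant and u(x) = c·x. -/

import Mathlib

open MvPolynomial

/-- The components of `u(x) = (2x·∇g(x) + g(x))·x − |x|²·∇g(x)` as polynomials. -/
noncomputable def uField (g : MvPolynomial (Fin 3) ℝ) (i : Fin 3) : MvPolynomial (Fin 3) ℝ :=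
  (2 * (∑ k : Fin 3, X k * pderiv k g) + g) * X i - (∑ k : Fin 3, X k ^ 2) * pderiv i g

/-- The Euler operator `x·∇`. -/
noncomputable def Eop (g : MvPolynomial (Fin 3) ℝ) : MvPolynomial (Fin 3) ℝ :=
  ∑ k : Fin 3, X k * pderiv k g

lemma euler_monomial (d : Fin 3 →₀ ℕ) (r : ℝ) :
    ∑ i : Fin 3, X i * pderiv i (monomial d r) = (d.degree : ℝ) • monomial d r := by
  have key : ∀ i : Fin 3, X i * pderiv i (monomial d r) = monomial d (r * d i) := by
    intro i
    rw [pderiv_monomial, X, monomial_mul, one_mul]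
    rcases Nat.eq_zero_or_pos (d i) with h | h
    · simp [h]
    · have hd : Finsupp.single i 1 + (d - Finsupp.single i 1) = d := by
        ext j
        rcases eq_or_ne j i with rfl | hj
        · simp [Finsupp.single_apply]; omega
        · simp [Finsupp.single_apply, Ne.symm hj, Finsupp.tsub_apply]
      rw [hd]
  have hdeg : ∑ i : Fin 3, (d i : ℝ) = (d.degree : ℝ) := by
    rw [Finsupp.degree_apply, Nat.cast_sum]
    exact (Finset.sum_subset (Finset.subset_univ _)
      (fun x _ hx => by simp [Finsupp.notMem_support_iff.mp hx])).symm
  simp only [key]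
  rw [smul_monomial, ← hdeg, ← map_sum]
  congr 1
  rw [smul_eq_mul, Finset.sum_mul]
  exact Finset.sum_congr rfl fun i _ => mul_comm _ _

/-- Euler's identity for homogeneous polynomials. -/
lemma euler_id {n : ℕ} {p : MvPolynomial (Fin 3) ℝ} (hp : p.IsHomogeneous n) :
    Eop p = (n : ℝ) • p := by
  unfold Eop
  conv_lhs => rw [p.as_sum]
  simp only [map_sum, Finset.mul_sum]
  rw [Finset.sum_comm]
  have : ∀ d ∈ p.support, ∑ i : Fin 3, X i * pderiv i (monomial d (coeff d p))
      = (n : ℝ) • monomial d (coeff d p) := by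
    intro d hd
    rw [euler_monomial]
    congr 2
    by_contra h
    exact (mem_support_iff.mp hd) (hp.coeff_eq_zero h)
  rw [Finset.sum_congr rfl this, ← Finset.smul_sum, ← p.as_sum]

lemma Eop_sum {ι : Type*} (s : Finset ι) (f : ι → MvPolynomial (Fin 3) ℝ) :
    Eop (∑ j ∈ s, f j) = ∑ j ∈ s, Eop (f j) := by
  simp only [Eop, map_sum, Finset.mul_sum]
  rw [Finset.sum_comm]

lemma Eop_smul (r : ℝ) (p : MvPolynomial (Fin 3) ℝ) : Eop (r • p) = r • Eop p := by
  unfold Eop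
  rw [Finset.smul_sum]
  refine Finset.sum_congr rfl fun k _ => ?_
  rw [Derivation.map_smul, mul_smul_comm]

/-- The divergence of `u` in terms of `g`, `x·∇g`, `x·∇(x·∇g)` and `Δg`. -/
lemma div_eq (g : MvPolynomial (Fin 3) ℝ) :
    ∑ i : Fin 3, pderiv i (uField g i) =
      3 * g + 5 * Eop g + 2 * Eop (Eop g)
        - (∑ k : Fin 3, X k ^ 2) * (∑ i : Fin 3, pderiv i (pderiv i g)) := by
  unfold uField Eop
  simp only [Fin.sum_univ_three, map_sub, map_add, pderiv_mul, pderiv_X, pow_two, two_mul]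
  simp only [Pi.single_apply, Fin.isValue]
  norm_num [Fin.ext_iff]
  ring

lemma hC_hC (m ℓ : ℕ) (p : MvPolynomial (Fin 3) ℝ) :
    homogeneousComponent m (homogeneousComponent ℓ p) =
      if m = ℓ then homogeneousComponent ℓ p else 0 :=
  homogeneousComponent_of_mem (homogeneousComponent_mem ℓ p)

/-- For a harmonic polynomial `g = Σ_ℓ g_ℓ` (homogeneous components `g_ℓ`),
`div u = Σ_ℓ (ℓ+1)(2ℓ+3) g_ℓ`; in particular if `div u` is constant then `g` is a
constant `c` and `u(x) = c·x`. -/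
theorem stmt17 (g : MvPolynomial (Fin 3) ℝ)
    (hg : ∑ i : Fin 3, pderiv i (pderiv i g) = 0) :
    (∑ i : Fin 3, pderiv i (uField g i)) =
      ∑ ℓ ∈ Finset.range (g.totalDegree + 1),
        (((ℓ : ℝ) + 1) * (2 * (ℓ : ℝ) + 3)) • homogeneousComponent ℓ g ∧
    ((∃ c : ℝ, (∑ i : Fin 3, pderiv i (uField g i)) = C c) →
      ∃ c : ℝ, g = C c ∧ ∀ i : Fin 3, uField g i = C c * X i) := by
  have hE : ∀ ℓ : ℕ, Eop (homogeneousComponent ℓ g) = (ℓ : ℝ) • homogeneousComponent ℓ g :=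
    fun ℓ => euler_id (homogeneousComponent_isHomogeneous ℓ g)
  have part1 : (∑ i : Fin 3, pderiv i (uField g i)) =
      ∑ ℓ ∈ Finset.range (g.totalDegree + 1),
        (((ℓ : ℝ) + 1) * (2 * (ℓ : ℝ) + 3)) • homogeneousComponent ℓ g := by
    rw [div_eq, hg, mul_zero, sub_zero]
    conv_lhs => rw [← g.sum_homogeneousComponent]
    simp only [Eop_sum, Eop_smul, hE]
    rw [Finset.mul_sum, Finset.mul_sum, Finset.mul_sum, ← Finset.sum_add_distrib,
      ← Finset.sum_add_distrib]
    refine Finset.sum_congr rfl fun ℓ _ => ?_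
    simp only [smul_eq_C_mul, map_mul, map_add, map_ofNat, map_one]
    ring
  refine ⟨part1, ?_⟩
  rintro ⟨c, hc⟩
  rw [part1] at hc
  -- all higher homogeneous components of g vanish
  have hzero : ∀ m : ℕ, 1 ≤ m → homogeneousComponent m g = 0 := by
    intro m hm
    rcases le_or_gt m g.totalDegree with hle | hlt
    · have happ := congrArg (homogeneousComponent m) hc
      rw [map_sum] at happ
      have hCc : homogeneousComponent m (C c : MvPolynomial (Fin 3) ℝ) = 0 :=
        homogeneousComponent_eq_zero m (C c) (by rw [totalDegree_C]; omega)
      have hterm : ∀ ℓ ∈ Finset.range (g.totalDegree + 1),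
          homogeneousComponent m
            ((((ℓ : ℝ) + 1) * (2 * (ℓ : ℝ) + 3)) • homogeneousComponent ℓ g) =
          if m = ℓ then (((ℓ : ℝ) + 1) * (2 * (ℓ : ℝ) + 3)) • homogeneousComponent ℓ g
          else 0 := by
        intro ℓ _
        rw [map_smul, hC_hC]
        split_ifs <;> simp
      rw [Finset.sum_congr rfl hterm, Finset.sum_ite_eq,
        if_pos (Finset.mem_range.mpr (by omega : m < g.totalDegree + 1)), hCc] at happ
      have hco : (((m : ℝ) + 1) * (2 * (m : ℝ) + 3)) ≠ 0 := by positivity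
      calc homogeneousComponent m g
          = (((m : ℝ) + 1) * (2 * (m : ℝ) + 3))⁻¹ •
              ((((m : ℝ) + 1) * (2 * (m : ℝ) + 3)) • homogeneousComponent m g) := by
            rw [smul_smul, inv_mul_cancel₀ hco, one_smul]
        _ = 0 := by rw [happ, smul_zero]
    · exact homogeneousComponent_eq_zero m g hlt
  have hg0 : g = C (coeff 0 g) := by
    conv_lhs => rw [← g.sum_homogeneousComponent]
    rw [Finset.sum_eq_single 0]
    · exact homogeneousComponent_zero g
    · intro ℓ _ hℓ
      exact hzero ℓ (by omega)
    · simp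
  refine ⟨coeff 0 g, hg0, fun i => ?_⟩
  conv_lhs => rw [hg0]
  unfold uField
  simp [pderiv_C]
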